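/- Let A be an n×n copositive matrix and let I ⊆ {1,…,n} be a nonempty index set. Then the following are equivalent: (a) A has a minimal zero with support I; (b) the principal submatrix A_I is positive semi-definite, its kernel is one-dimensional, and the kernel of A_I is spanned by a vector all of whose entries are positive. -/

import Mathlib

open Matrix

/-- A symmetric matrix `A` is copositive if `xᵀ A x ≥ 0` for all entrywise nonnegative `x`. -/
def Copositive {n : ℕ} (A : Matrix (Fin n) (Fin n) ℝ) : Prop :=
  A.IsSymm ∧ ∀ x : Fin n → ℝ, (∀ i, 0 ≤ x i) → 0 ≤ x ⬝ᵥ A.mulVec x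

/-- The support of a vector. -/
def Supp {ι : Type*} (u : ι → ℝ) : Set ι := {i | u i ≠ 0}

/-- A zero of a copositive matrix: a nonzero nonnegative vector `u` with `uᵀ A u = 0`. -/
def IsZeroOf {n : ℕ} (A : Matrix (Fin n) (Fin n) ℝ) (u : Fin n → ℝ) : Prop :=
  u ≠ 0 ∧ (∀ i, 0 ≤ u i) ∧ u ⬝ᵥ A.mulVec u = 0

/-- A minimal zero: a zero such that no zero has support strictly contained in its support. -/
def IsMinimalZeroOf {n : ℕ} (A : Matrix (Fin n) (Fin n) ℝ) (u : Fin n → ℝ) : Prop :=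
  IsZeroOf A u ∧ ¬ ∃ v, IsZeroOf A v ∧ Supp v ⊂ Supp u

/-- The principal submatrix of `A` with rows and columns in `I`. -/
def subMat {n : ℕ} (A : Matrix (Fin n) (Fin n) ℝ) (I : Finset (Fin n)) :
    Matrix {i // i ∈ I} {i // i ∈ I} ℝ :=
  A.submatrix Subtype.val Subtype.val

/-- The subvector of `u` with indices in `I`. -/
def subVec {n : ℕ} (u : Fin n → ℝ) (I : Finset (Fin n)) : {i // i ∈ I} → ℝ :=
  fun i => u i.val

/-- Irreducibility of a copositive matrix `A` with respect to a set `M` of matrices. -/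
def IrreducibleWrtSet {n : ℕ} (A : Matrix (Fin n) (Fin n) ℝ)
    (M : Set (Matrix (Fin n) (Fin n) ℝ)) : Prop :=
  ¬ ∃ γ : ℝ, 0 < γ ∧ ∃ B ∈ M, B ≠ 0 ∧ Copositive (A - γ • B)

/-- Irreducibility of a copositive matrix `A` with respect to a single matrix `M`. -/
def IrreducibleWrtMat {n : ℕ} (A M : Matrix (Fin n) (Fin n) ℝ) : Prop :=
  ¬ ∃ γ : ℝ, 0 < γ ∧ Copositive (A - γ • M)

/-- An extremal element of a cone `K` of vectors. -/
def IsExtremalIn {ι : Type*} (K : Set (ι → ℝ)) (u : ι → ℝ) : Prop :=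
  u ∈ K ∧ u ≠ 0 ∧ ∀ v w, v ∈ K → w ∈ K → u = v + w →
    (∃ a : ℝ, 0 ≤ a ∧ v = a • u) ∧ (∃ b : ℝ, 0 ≤ b ∧ w = b • u)

/-- The matrix with entries 1 at positions `(i,j)` and `(j,i)` and 0 elsewhere. -/
def Eij {n : ℕ} (i j : Fin n) : Matrix (Fin n) (Fin n) ℝ :=
  fun a b => if (a = i ∧ b = j) ∨ (a = j ∧ b = i) then 1 else 0

-- symmetric cross term
lemma cross {n : ℕ} {A : Matrix (Fin n) (Fin n) ℝ} (hA : A.IsSymm) (u w : Fin n → ℝ) :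
    u ⬝ᵥ A.mulVec w = w ⬝ᵥ A.mulVec u := by
  rw [dotProduct_mulVec, ← mulVec_transpose, hA.eq, dotProduct_comm]

lemma expand {n : ℕ} {A : Matrix (Fin n) (Fin n) ℝ} (hA : A.IsSymm) (u w : Fin n → ℝ) (t : ℝ) :
    (u + t • w) ⬝ᵥ A.mulVec (u + t • w)
      = u ⬝ᵥ A.mulVec u + 2 * t * (w ⬝ᵥ A.mulVec u) + t ^ 2 * (w ⬝ᵥ A.mulVec w) := by
  simp only [mulVec_add, mulVec_smul, dotProduct_add, add_dotProduct, dotProduct_smul,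
    smul_dotProduct, smul_eq_mul, cross hA u w]
  ring

-- sub quadratic form equality for vectors vanishing off I
lemma sub_mulVec {n : ℕ} (A : Matrix (Fin n) (Fin n) ℝ) (I : Finset (Fin n))
    (v : Fin n → ℝ) (hv : ∀ i ∉ I, v i = 0) (i : Fin n) (hi : i ∈ I) :
    (subMat A I).mulVec (subVec v I) ⟨i, hi⟩ = A.mulVec v i := by
  show ∑ j : I, A i j.val * v j.val = ∑ j, A i j * v j
  rw [Finset.sum_coe_sort I (fun j => A i j * v j)]
  refine Finset.sum_subset (Finset.subset_univ I) ?_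
  intro j _ hj
  rw [hv j hj, mul_zero]

lemma sub_quad {n : ℕ} (A : Matrix (Fin n) (Fin n) ℝ) (I : Finset (Fin n))
    (v : Fin n → ℝ) (hv : ∀ i ∉ I, v i = 0) :
    subVec v I ⬝ᵥ (subMat A I).mulVec (subVec v I) = v ⬝ᵥ A.mulVec v := by
  have h : ∀ j : {x // x ∈ I}, (subMat A I).mulVec (subVec v I) j = A.mulVec v j.val :=
    fun j => sub_mulVec A I v hv j.val j.2
  show ∑ j : I, subVec v I j * (subMat A I).mulVec (subVec v I) j
      = ∑ j, v j * A.mulVec v j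
  calc ∑ j : I, subVec v I j * (subMat A I).mulVec (subVec v I) j
      = ∑ j : I, v j.val * A.mulVec v j.val := by
        refine Finset.sum_congr rfl fun j _ => ?_; rw [h j]; rfl
    _ = ∑ j ∈ I, v j * A.mulVec v j := Finset.sum_coe_sort I (fun j => v j * A.mulVec v j)
    _ = ∑ j, v j * A.mulVec v j := by
        refine Finset.sum_subset (Finset.subset_univ I) ?_
        intro j _ hj; rw [hv j hj, zero_mul]

-- For a zero u of copositive A, (Au)_i >= 0 for all i
lemma mulVec_nonneg {n : ℕ} {A : Matrix (Fin n) (Fin n) ℝ} (hA : Copositive A)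
    {u : Fin n → ℝ} (hu : IsZeroOf A u) (i : Fin n) : 0 ≤ A.mulVec u i := by
  by_contra hneg
  push_neg at hneg
  set e : Fin n → ℝ := Pi.single i 1 with he
  set a := A.mulVec u i with ha
  set b := e ⬝ᵥ A.mulVec e with hb
  set t := -a / (|b| + 1) with ht
  have hbpos : (0:ℝ) < |b| + 1 := by positivity
  have htpos : 0 < t := div_pos (by linarith) hbpos
  have hcross : e ⬝ᵥ A.mulVec u = a := by
    rw [ha, he]; simp [single_dotProduct]
  have hnn : ∀ j, 0 ≤ (u + t • e) j := by
    intro j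
    rcases eq_or_ne j i with rfl | hji
    · simp only [he, Pi.add_apply, Pi.smul_apply, Pi.single_eq_same, smul_eq_mul, mul_one]
      have := hu.2.1 j
      linarith
    · simp only [he, Pi.add_apply, Pi.smul_apply, Pi.single_eq_of_ne hji, smul_eq_mul, mul_zero,
        add_zero]
      exact hu.2.1 j
  have h0 := hA.2 _ hnn
  rw [expand hA.1 u e t, hu.2.2, hcross, zero_add] at h0
  have htb : t * b ≤ t * |b| := by
    have := le_abs_self b
    nlinarith
  have htabs : t * |b| < -a := by
    rw [ht, div_mul_eq_mul_div, mul_comm, div_lt_iff₀ hbpos]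
    nlinarith [abs_nonneg b]
  nlinarith

lemma mulVec_zero_on_supp {n : ℕ} {A : Matrix (Fin n) (Fin n) ℝ} (hA : Copositive A)
    {u : Fin n → ℝ} (hu : IsZeroOf A u) (i : Fin n) (hi : u i ≠ 0) : A.mulVec u i = 0 := by
  have hsum : ∑ j, u j * A.mulVec u j = 0 := hu.2.2
  have hterm : ∀ j ∈ Finset.univ, 0 ≤ u j * A.mulVec u j := fun j _ =>
    mul_nonneg (hu.2.1 j) (mulVec_nonneg hA hu j)
  have := (Finset.sum_eq_zero_iff_of_nonneg hterm).mp hsum i (Finset.mem_univ i)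
  have hui : 0 < u i := lt_of_le_of_ne (hu.2.1 i) (Ne.symm hi)
  nlinarith [mulVec_nonneg hA hu i]

/-- Extension of a vector on `I` by zero. -/
def extVec {n : ℕ} (I : Finset (Fin n)) (z : {i // i ∈ I} → ℝ) : Fin n → ℝ :=
  fun i => if h : i ∈ I then z ⟨i, h⟩ else 0

lemma extVec_off {n : ℕ} (I : Finset (Fin n)) (z : {i // i ∈ I} → ℝ) (i : Fin n) (hi : i ∉ I) :
    extVec I z i = 0 := dif_neg hi

lemma extVec_on {n : ℕ} (I : Finset (Fin n)) (z : {i // i ∈ I} → ℝ) (i : Fin n) (hi : i ∈ I) :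
    extVec I z i = z ⟨i, hi⟩ := dif_pos hi

lemma subVec_extVec {n : ℕ} (I : Finset (Fin n)) (z : {i // i ∈ I} → ℝ) :
    subVec (extVec I z) I = z := by
  funext j; exact extVec_on I z j.val j.2

-- forward: PSD part
lemma fwd_psd {n : ℕ} {A : Matrix (Fin n) (Fin n) ℝ} (hA : Copositive A)
    {I : Finset (Fin n)} (hIne : I.Nonempty) {u : Fin n → ℝ} (hu : IsZeroOf A u)
    (hsupp : ∀ i, u i ≠ 0 ↔ i ∈ I) : (subMat A I).PosSemidef := by
  have hu0 : ∀ i ∉ I, u i = 0 := fun i hi => by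
    by_contra h; exact hi ((hsupp i).mp h)
  have hupos : ∀ i ∈ I, 0 < u i := fun i hi =>
    lt_of_le_of_ne (hu.2.1 i) (Ne.symm ((hsupp i).mpr hi))
  have hAu : ∀ i ∈ I, A.mulVec u i = 0 := fun i hi =>
    mulVec_zero_on_supp hA hu i ((hsupp i).mpr hi)
  rw [Matrix.posSemidef_iff_dotProduct_mulVec]
  constructor
  · exact Matrix.ext fun i j => by
      simpa [subMat, Matrix.conjTranspose_apply] using (hA.1.apply j.val i.val).symm
  · intro x
    have hsx : star x = x := by funext j; simp
    rw [hsx]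
    set v : Fin n → ℝ := extVec I x with hv
    have hv0 : ∀ i ∉ I, v i = 0 := fun i hi => extVec_off I x i hi
    have hsv : subVec v I = x := subVec_extVec I x
    have hq : x ⬝ᵥ (subMat A I).mulVec x = v ⬝ᵥ A.mulVec v := by
      rw [← hsv]; exact sub_quad A I v hv0
    set t := I.inf' hIne (fun i => u i / (|v i| + 1)) with ht
    have htpos : 0 < t := by
      rw [ht]
      rw [Finset.lt_inf'_iff]
      intro i hi
      exact div_pos (hupos i hi) (by positivity)
    have hnn : ∀ j, 0 ≤ (u + t • v) j := by
      intro j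
      by_cases hj : j ∈ I
      · have h1 : t ≤ u j / (|v j| + 1) := Finset.inf'_le _ hj
        have h2 : (0:ℝ) < |v j| + 1 := by positivity
        have h3 : t * (|v j| + 1) ≤ u j := by
          rw [← le_div_iff₀ h2]; exact h1
        have h4 : -(t * v j) ≤ t * |v j| := by
          rw [← mul_neg]
          exact mul_le_mul_of_nonneg_left (neg_le_abs (v j)) htpos.le
        simp only [Pi.add_apply, Pi.smul_apply, smul_eq_mul]
        nlinarith [abs_nonneg (v j)]
      · simp only [Pi.add_apply, Pi.smul_apply, smul_eq_mul, hv0 j hj, mul_zero, add_zero]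
        exact hu.2.1 j
    have h0 := hA.2 _ hnn
    have hcross : v ⬝ᵥ A.mulVec u = 0 := by
      unfold dotProduct
      apply Finset.sum_eq_zero
      intro j _
      by_cases hj : j ∈ I
      · rw [hAu j hj, mul_zero]
      · rw [hv0 j hj, zero_mul]
    rw [expand hA.1 u v t, hu.2.2, hcross, mul_zero, zero_add, zero_add] at h0
    rw [hq]
    by_contra hneg
    push_neg at hneg
    nlinarith [mul_pos htpos htpos]

-- forward: A_I z = 0 for z = subVec u I
lemma fwd_ker {n : ℕ} {A : Matrix (Fin n) (Fin n) ℝ} (hA : Copositive A)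
    {I : Finset (Fin n)} {u : Fin n → ℝ} (hu : IsZeroOf A u)
    (hsupp : ∀ i, u i ≠ 0 ↔ i ∈ I) : (subMat A I).mulVec (subVec u I) = 0 := by
  have hu0 : ∀ i ∉ I, u i = 0 := fun i hi => by
    by_contra h; exact hi ((hsupp i).mp h)
  funext j
  rw [show ((0 : {i // i ∈ I} → ℝ) j = 0) from rfl]
  obtain ⟨j, hj⟩ := j
  rw [sub_mulVec A I u hu0 j hj]
  exact mulVec_zero_on_supp hA hu j ((hsupp j).mpr hj)

theorem stmt7 {n : ℕ} (A : Matrix (Fin n) (Fin n) ℝ) (hA : Copositive A)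
    (I : Finset (Fin n)) (hIne : I.Nonempty) :
    (∃ u, IsMinimalZeroOf A u ∧ Supp u = (I : Set (Fin n))) ↔
      ((subMat A I).PosSemidef ∧ ∃ z : {i // i ∈ I} → ℝ, (∀ i, 0 < z i) ∧
        ∀ x : {i // i ∈ I} → ℝ, (subMat A I).mulVec x = 0 ↔ ∃ c : ℝ, x = c • z) := by
  obtain ⟨i0, hi0⟩ := hIne
  have hne : Nonempty {i // i ∈ I} := ⟨⟨i0, hi0⟩⟩
  constructor
  · rintro ⟨u, ⟨huz, humin⟩, hsupp⟩
    have hsupp' : ∀ i, u i ≠ 0 ↔ i ∈ I := fun i => by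
      constructor
      · intro h; have : i ∈ Supp u := h; rw [hsupp] at this; exact this
      · intro h; have : i ∈ Supp u := by rw [hsupp]; exact h
        exact this
    have hu0 : ∀ i ∉ I, u i = 0 := fun i hi => by
      by_contra h; exact hi ((hsupp' i).mp h)
    have hupos : ∀ i ∈ I, 0 < u i := fun i hi =>
      lt_of_le_of_ne (huz.2.1 i) (Ne.symm ((hsupp' i).mpr hi))
    have hAIz := fwd_ker hA huz hsupp'
    refine ⟨fwd_psd hA ⟨i0, hi0⟩ huz hsupp', subVec u I, fun j => hupos j.val j.2, fun x => ?_⟩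
    constructor
    · -- kernel forward: x in kernel implies multiple of z
      intro hx
      set z := subVec u I with hz
      set c := Finset.univ.inf' (Finset.univ_nonempty) (fun j => x j / z j) with hc
      refine ⟨c, ?_⟩
      set y : {i // i ∈ I} → ℝ := x - c • z with hy
      have hAIy : (subMat A I).mulVec y = 0 := by
        rw [hy, mulVec_sub, hx, mulVec_smul, hAIz, smul_zero, sub_zero]
      have hzpos : ∀ j, 0 < z j := fun j => hupos j.val j.2
      have hynn : ∀ j, 0 ≤ y j := by
        intro j
        have h1 : c ≤ x j / z j := Finset.inf'_le _ (Finset.mem_univ j)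
        have h2 : c * z j ≤ x j := by
          rw [← le_div_iff₀ (hzpos j)]; exact h1
        simp only [hy, Pi.sub_apply, Pi.smul_apply, smul_eq_mul]
        linarith
      obtain ⟨j0, -, hj0⟩ := Finset.exists_mem_eq_inf' (Finset.univ_nonempty) (fun j => x j / z j)
      have hyj0 : y j0 = 0 := by
        simp only [hy, Pi.sub_apply, Pi.smul_apply, smul_eq_mul]
        rw [hc, hj0, div_mul_cancel₀ _ (hzpos j0).ne', sub_self]
      -- show y = 0
      have hy0 : y = 0 := by
        by_contra hyne
        set v : Fin n → ℝ := extVec I y with hv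
        have hv0 : ∀ i ∉ I, v i = 0 := fun i hi => extVec_off I y i hi
        have hsv : subVec v I = y := subVec_extVec I y
        have hvz : IsZeroOf A v := by
          refine ⟨?_, ?_, ?_⟩
          · intro h
            apply hyne
            rw [← hsv, h]; rfl
          · intro i
            by_cases hi : i ∈ I
            · rw [hv, extVec_on I y i hi]; exact hynn _
            · rw [hv0 i hi]
          · rw [← sub_quad A I v hv0, hsv, hAIy, dotProduct_zero]
        apply humin
        refine ⟨v, hvz, ?_⟩
        rw [hsupp, Set.ssubset_iff_subset_ne]
        constructor
        · intro i hi
          by_contra hiI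
          exact hi (hv0 i hiI)
        · intro heq
          have : (j0 : Fin n) ∈ Supp v := by rw [heq]; exact j0.2
          apply this
          rw [hv, extVec_on I y j0.val j0.2]
          simpa using hyj0
      funext j
      have := congrFun hy0 j
      simp only [hy, Pi.sub_apply, Pi.zero_apply, sub_eq_zero] at this
      exact this
    · rintro ⟨c, rfl⟩
      rw [mulVec_smul, hAIz, smul_zero]
  · rintro ⟨hPSD, z, hzpos, hker⟩
    set u : Fin n → ℝ := extVec I z with hu
    have hu0 : ∀ i ∉ I, u i = 0 := fun i hi => extVec_off I z i hi
    have hsz : subVec u I = z := subVec_extVec I z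
    have hAIz : (subMat A I).mulVec z = 0 := (hker z).mpr ⟨1, (one_smul _ _).symm⟩
    have hsupp : Supp u = (I : Set (Fin n)) := by
      ext i
      simp only [Supp, Set.mem_setOf_eq, Finset.coe_mem, Finset.mem_coe]
      constructor
      · intro h
        by_contra hi
        exact h (hu0 i hi)
      · intro hi
        rw [hu, extVec_on I z i hi]
        exact (hzpos ⟨i, hi⟩).ne'
    have huz : IsZeroOf A u := by
      refine ⟨?_, ?_, ?_⟩
      · intro h
        have : u i0 = 0 := congrFun h i0
        rw [hu, extVec_on I z i0 hi0] at this
        exact (hzpos ⟨i0, hi0⟩).ne' this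
      · intro i
        by_cases hi : i ∈ I
        · rw [hu, extVec_on I z i hi]; exact (hzpos _).le
        · rw [hu0 i hi]
      · rw [← sub_quad A I u hu0, hsz, hAIz, dotProduct_zero]
    refine ⟨u, ⟨huz, ?_⟩, hsupp⟩
    rintro ⟨v, hvz, hss⟩
    rw [hsupp] at hss
    have hv0 : ∀ i ∉ I, v i = 0 := by
      intro i hi
      by_contra h
      exact hi (hss.1 h)
    have hq : subVec v I ⬝ᵥ (subMat A I).mulVec (subVec v I) = 0 := by
      rw [sub_quad A I v hv0]; exact hvz.2.2
    have hker' : (subMat A I).mulVec (subVec v I) = 0 := by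
      have := (hPSD.dotProduct_mulVec_zero_iff (subVec v I)).mp ?_
      · exact this
      · rw [show star (subVec v I) = subVec v I from by funext j; simp]
        exact hq
    obtain ⟨c, hc⟩ := (hker (subVec v I)).mp hker'
    have hcne : c ≠ 0 := by
      rintro rfl
      rw [zero_smul] at hc
      apply hvz.1
      funext i
      by_cases hi : i ∈ I
      · exact congrFun hc ⟨i, hi⟩
      · exact hv0 i hi
    have : (I : Set (Fin n)) ⊆ Supp v := by
      intro i hi
      have : v i = c * z ⟨i, hi⟩ := congrFun hc ⟨i, hi⟩
      simp only [Supp, Set.mem_setOf_eq, this]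
      exact mul_ne_zero hcne (hzpos _).ne'
    exact (hss.2 this).elim
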